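/- Let H and V be real Hilbert spaces, let i : H → V be an injective compact continuous linear map with dense range, let a : H × H → ℝ be a continuous symmetric bilinear form, and suppose there exist λ > 0 and α > 0 with a(x,x) + λ⟨i x, i x⟩_V ≥ α‖x‖_H² for all x ∈ H. Let T : V → V be a linear map such that for every v ∈ V there exists x_v ∈ H with T v = i x_v and a(x_v, y) + λ⟨i x_v, i y⟩_V = ⟨v, i y⟩_V for all y ∈ H. Then for every x ∈ H: λ · T(i x) = i x if and only if a(x, y) = 0 for all y ∈ H. -/

import Mathlib

/-- Lemma A.1 (ii): the kernel of the densely defined operator `A_S = T⁻¹ - λ·id`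
(expressed via the resolvent relation `λ • T (i x) = i x`) coincides with the radical
`{x ∈ H : a(x,·) ≡ 0}` of the bilinear form `a`. -/
theorem resolvent_fixed_point_iff_radical
    {H V : Type*}
    [NormedAddCommGroup H] [InnerProductSpace ℝ H] [CompleteSpace H]
    [NormedAddCommGroup V] [InnerProductSpace ℝ V] [CompleteSpace V]
    (i : H →L[ℝ] V) (hinj : Function.Injective i)
    (hcomp : IsCompactOperator (⇑i)) (hdense : DenseRange (⇑i))
    (a : H →L[ℝ] H →L[ℝ] ℝ) (hsymm : ∀ x y : H, a x y = a y x)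
    (lam α : ℝ) (hlam : 0 < lam) (hα : 0 < α)
    (hcoer : ∀ x : H, α * ‖x‖ ^ 2 ≤ a x x + lam * (inner ℝ (i x) (i x) : ℝ))
    (T : V →ₗ[ℝ] V)
    (hT : ∀ v : V, ∃ x : H, T v = i x ∧
      ∀ y : H, a x y + lam * (inner ℝ (i x) (i y) : ℝ) = (inner ℝ v (i y) : ℝ)) :
    ∀ x : H, (lam • T (i x) = i x ↔ ∀ y : H, a x y = 0) := by
  intro x
  obtain ⟨x', hTx', heq⟩ := hT (i x)
  constructor
  · intro h y
    rw [hTx'] at h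
    have hix : i (lam • x') = i x := by rw [map_smul]; exact h
    have hxl : lam • x' = x := hinj hix
    have h1 : (inner ℝ (i x) (i y) : ℝ) = lam * inner ℝ (i x') (i y) := by
      rw [← hxl, map_smul, inner_smul_left]
      simp
    have h2 : a x' y = 0 := by
      have := heq y
      rw [h1] at this
      linarith
    rw [← hxl, map_smul]
    simp [h2]
  · intro h
    set z := x' - lam⁻¹ • x with hz
    have key : ∀ y : H, a z y + lam * (inner ℝ (i z) (i y) : ℝ) = 0 := by
      intro y
      have haz : a z y = a x' y := by
        simp [hz, map_sub, map_smul, h y]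
      have hiz : (inner ℝ (i z) (i y) : ℝ)
          = inner ℝ (i x') (i y) - lam⁻¹ * inner ℝ (i x) (i y) := by
        simp [hz, map_sub, map_smul, inner_sub_left, inner_smul_left]
      have := heq y
      rw [haz, hiz]
      field_simp
      linarith
    have hz0 : z = 0 := by
      have h1 := hcoer z
      rw [key z] at h1
      have : ‖z‖ ^ 2 ≤ 0 := by nlinarith
      have : ‖z‖ = 0 := by nlinarith [norm_nonneg z, sq_nonneg ‖z‖]
      exact norm_eq_zero.mp this
    have hx' : x' = lam⁻¹ • x := by
      have := sub_eq_zero.mp hz0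
      simpa [hz] using this
    rw [hTx', hx', map_smul, smul_smul, mul_inv_cancel₀ hlam.ne', one_smul]
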